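/- Let f : ℝ² → ℝ be 2π-periodic in each variable, continuous at every point (θ,η) with (θ,η) ∉ 2πℤ², and suppose there is a constant C such that |f(θ,η)| ≤ C·(1 + |log d((θ,η), 2πℤ²)|) for all (θ,η) ∉ 2πℤ², where d denotes Euclidean distance. Then f is Lebesgue integrable on [0,2π]² and lim_{n→∞} (1/n²) · Σ_{j=0}^{n−1} Σ_{k=0}^{n−1} f( (2j+1)π/n, (2k+1)π/n ) = (1/(4π²)) · ∫_{[0,2π]²} f(θ,η) dθ dη. -/

import Mathlib

open MeasureTheory

/-- The lattice `2πℤ² ⊂ ℝ²`. -/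
def twoPiLattice : Set (ℝ × ℝ) :=
  {p | ∃ m n : ℤ, p = (2 * Real.pi * m, 2 * Real.pi * n)}

/-- The Euclidean distance from a point of `ℝ²` to the lattice `2πℤ²`. -/
noncomputable def distTwoPiLattice (p : ℝ × ℝ) : ℝ :=
  ⨅ q : ℤ × ℤ, Real.sqrt ((p.1 - 2 * Real.pi * q.1) ^ 2 + (p.2 - 2 * Real.pi * q.2) ^ 2)

noncomputable def dZ (x : ℝ) : ℝ := |x - 2 * Real.pi * round (x / (2 * Real.pi))|

noncomputable def wfun (x : ℝ) : ℝ := dZ x ^ (-(4⁻¹) : ℝ)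

noncomputable def toC (p : ℝ × ℝ) : ℂ := ⟨p.1, p.2⟩

lemma sqrt_sq_add_sq (x y : ℝ) : Real.sqrt (x ^ 2 + y ^ 2) = ‖(⟨x, y⟩ : ℂ)‖ := by
  rw [Complex.norm_def, Complex.normSq_mk]; ring_nf

lemma dZ_nonneg (x : ℝ) : 0 ≤ dZ x := abs_nonneg _

lemma dZ_le (x : ℝ) (m : ℤ) : dZ x ≤ |x - 2 * Real.pi * m| := by
  have h2 : (0:ℝ) < 2 * Real.pi := by positivity
  have hne : (2 * Real.pi) ≠ 0 := ne_of_gt h2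
  have key : ∀ k : ℤ, |x / (2*Real.pi) - k| * (2*Real.pi) = |x - 2*Real.pi*k| := by
    intro k
    rw [show |x / (2*Real.pi) - (k:ℝ)| * (2*Real.pi) = |(x / (2*Real.pi) - k) * (2*Real.pi)| by
      rw [abs_mul, abs_of_pos h2]]
    congr 1
    field_simp
  have h1 : |x / (2*Real.pi) - round (x / (2*Real.pi))| * (2*Real.pi)
      ≤ |x / (2*Real.pi) - m| * (2*Real.pi) :=
    mul_le_mul_of_nonneg_right (round_le (x / (2 * Real.pi)) m) h2.le
  rw [key, key] at h1
  simpa [dZ] using h1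

lemma dZ_eq_zero_iff (x : ℝ) : dZ x = 0 ↔ ∃ m : ℤ, x = 2 * Real.pi * m := by
  constructor
  · intro h
    exact ⟨round (x / (2*Real.pi)), by have := abs_eq_zero.1 h; linarith⟩
  · rintro ⟨m, rfl⟩
    have := dZ_le (2 * Real.pi * m) m
    simp at this
    exact le_antisymm (by simpa using this) (dZ_nonneg _)

lemma distL_eq (p : ℝ × ℝ) :
    distTwoPiLattice p = ⨅ q : ℤ × ℤ, ‖toC p - (⟨2*Real.pi*q.1, 2*Real.pi*q.2⟩ : ℂ)‖ := by
  unfold distTwoPiLattice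
  refine iInf_congr fun q => ?_
  rw [sqrt_sq_add_sq]
  congr 1

lemma distL_bdd (p : ℝ × ℝ) :
    BddBelow (Set.range fun q : ℤ × ℤ =>
      Real.sqrt ((p.1 - 2 * Real.pi * q.1) ^ 2 + (p.2 - 2 * Real.pi * q.2) ^ 2)) := by
  exact ⟨0, by rintro _ ⟨q, rfl⟩; positivity⟩

lemma distL_nonneg (p : ℝ × ℝ) : 0 ≤ distTwoPiLattice p :=
  le_ciInf fun q => by positivity

lemma distL_le (p : ℝ × ℝ) (q : ℤ × ℤ) :
    distTwoPiLattice p ≤ Real.sqrt ((p.1 - 2 * Real.pi * q.1) ^ 2 + (p.2 - 2 * Real.pi * q.2) ^ 2) :=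
  ciInf_le (distL_bdd p) q

lemma dZ_le_distL_fst (p : ℝ × ℝ) : dZ p.1 ≤ distTwoPiLattice p := by
  refine le_ciInf fun q => ?_
  calc dZ p.1 ≤ |p.1 - 2*Real.pi*q.1| := dZ_le _ _
    _ = Real.sqrt ((p.1 - 2*Real.pi*q.1)^2) := (Real.sqrt_sq_eq_abs _).symm
    _ ≤ _ := Real.sqrt_le_sqrt (by nlinarith [sq_nonneg (p.2 - 2*Real.pi*q.2)])

lemma dZ_le_distL_snd (p : ℝ × ℝ) : dZ p.2 ≤ distTwoPiLattice p := by
  refine le_ciInf fun q => ?_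
  calc dZ p.2 ≤ |p.2 - 2*Real.pi*q.2| := dZ_le _ _
    _ = Real.sqrt ((p.2 - 2*Real.pi*q.2)^2) := (Real.sqrt_sq_eq_abs _).symm
    _ ≤ _ := Real.sqrt_le_sqrt (by nlinarith [sq_nonneg (p.1 - 2*Real.pi*q.1)])

lemma distL_triangle (p c : ℝ × ℝ) :
    distTwoPiLattice p ≤ distTwoPiLattice c + ‖toC p - toC c‖ := by
  rw [distL_eq p, distL_eq c]
  rw [← sub_le_iff_le_add]
  refine le_ciInf fun q => ?_
  rw [sub_le_iff_le_add]
  calc (⨅ q : ℤ × ℤ, ‖toC p - (⟨2*Real.pi*q.1, 2*Real.pi*q.2⟩ : ℂ)‖)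
      ≤ ‖toC p - (⟨2*Real.pi*q.1, 2*Real.pi*q.2⟩ : ℂ)‖ := by
        refine ciInf_le ⟨0, ?_⟩ q
        rintro _ ⟨r, rfl⟩; positivity
    _ ≤ ‖toC c - (⟨2*Real.pi*q.1, 2*Real.pi*q.2⟩ : ℂ)‖ + ‖toC p - toC c‖ := by
        have : toC p - (⟨2*Real.pi*q.1, 2*Real.pi*q.2⟩ : ℂ)
            = (toC c - ⟨2*Real.pi*q.1, 2*Real.pi*q.2⟩) + (toC p - toC c) := by ring
        rw [this]; exact norm_add_le _ _

lemma neg_log_le {d : ℝ} (hd : 0 < d) : -Real.log d ≤ 2 * d ^ (-(2⁻¹) : ℝ) := by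
  have ht : (0:ℝ) < d ^ (-(2⁻¹) : ℝ) := Real.rpow_pos_of_pos hd _
  have h1 : Real.log (d ^ (-(2⁻¹) : ℝ)) = (-(2⁻¹) : ℝ) * Real.log d := Real.log_rpow hd _
  have h2 : Real.log (d ^ (-(2⁻¹) : ℝ)) ≤ d ^ (-(2⁻¹) : ℝ) - 1 :=
    Real.log_le_sub_one_of_pos ht
  rw [h1] at h2
  linarith

lemma abs_log_le {d : ℝ} (hd : 0 < d) (h9 : d ≤ 9) :
    |Real.log d| ≤ 8 + 2 * d ^ (-(2⁻¹) : ℝ) := by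
  have ht : (0:ℝ) < d ^ (-(2⁻¹) : ℝ) := Real.rpow_pos_of_pos hd _
  rcases le_or_gt 1 d with h | h
  · rw [abs_of_nonneg (Real.log_nonneg h)]
    have := Real.log_le_sub_one_of_pos hd
    linarith
  · rw [abs_of_nonpos (Real.log_nonpos hd.le h.le)]
    have := neg_log_le hd
    linarith

lemma distL_rpow_le (p : ℝ × ℝ) (h1 : 0 < dZ p.1) (h2 : 0 < dZ p.2) :
    (distTwoPiLattice p) ^ (-(2⁻¹) : ℝ) ≤ wfun p.1 * wfun p.2 := by
  set u : ℝ := dZ p.1 * dZ p.2 with hu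
  have hu0 : 0 < u := mul_pos h1 h2
  have hD0 : 0 < distTwoPiLattice p := lt_of_lt_of_le h1 (dZ_le_distL_fst p)
  have hsq : Real.sqrt u ≤ distTwoPiLattice p := by
    have : u ≤ (distTwoPiLattice p) ^ 2 := by
      have a1 := dZ_le_distL_fst p
      have a2 := dZ_le_distL_snd p
      nlinarith [dZ_nonneg p.1, dZ_nonneg p.2]
    calc Real.sqrt u ≤ Real.sqrt ((distTwoPiLattice p) ^ 2) := Real.sqrt_le_sqrt this
      _ = distTwoPiLattice p := Real.sqrt_sq hD0.le
  have step1 : (distTwoPiLattice p) ^ (-(2⁻¹) : ℝ) ≤ (Real.sqrt u) ^ (-(2⁻¹) : ℝ) :=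
    Real.rpow_le_rpow_of_nonpos (Real.sqrt_pos.2 hu0) hsq (by norm_num)
  have step2 : (Real.sqrt u) ^ (-(2⁻¹) : ℝ) = u ^ (-(4⁻¹) : ℝ) := by
    rw [Real.sqrt_eq_rpow, ← Real.rpow_mul hu0.le]
    norm_num
  have step3 : u ^ (-(4⁻¹) : ℝ) = wfun p.1 * wfun p.2 := by
    rw [hu, Real.mul_rpow (dZ_nonneg _) (dZ_nonneg _)]; rfl
  rw [step2, step3] at step1
  exact step1

lemma distL_le_nine {p : ℝ × ℝ}
    (hp : p ∈ Set.Icc (0:ℝ) (2*Real.pi) ×ˢ Set.Icc (0:ℝ) (2*Real.pi)) :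
    distTwoPiLattice p ≤ 9 := by
  obtain ⟨⟨h1, h2⟩, ⟨h3, h4⟩⟩ := hp
  have hpi := Real.pi_lt_d2
  have hpi0 := Real.pi_pos
  have key := distL_le p ((0:ℤ), (0:ℤ))
  simp only [Int.cast_zero, mul_zero, sub_zero] at key
  calc distTwoPiLattice p ≤ Real.sqrt (p.1 ^ 2 + p.2 ^ 2) := key
    _ ≤ Real.sqrt (9 ^ 2) := Real.sqrt_le_sqrt (by nlinarith)
    _ = 9 := Real.sqrt_sq (by norm_num)

noncomputable def cellS (n j k : ℕ) : Set (ℝ × ℝ) :=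
  Set.Ico (2*Real.pi*j/n) (2*Real.pi*(j+1)/n) ×ˢ Set.Ico (2*Real.pi*k/n) (2*Real.pi*(k+1)/n)

noncomputable def ctr (n j k : ℕ) : ℝ × ℝ :=
  ((2*(j:ℝ)+1)*Real.pi/n, (2*(k:ℝ)+1)*Real.pi/n)

lemma cell1_abs {n j : ℕ} (hn : 0 < n) {x : ℝ}
    (h1 : 2*Real.pi*j/n ≤ x) (h2 : x < 2*Real.pi*(j+1)/n) :
    |x - (2*(j:ℝ)+1)*Real.pi/n| ≤ Real.pi/n := by
  have hn' : (0:ℝ) < n := by exact_mod_cast hn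
  have hpi := Real.pi_pos
  have e1 : 2*Real.pi*(j:ℝ)/n - (2*(j:ℝ)+1)*Real.pi/n = -(Real.pi/n) := by
    field_simp; ring
  have e2 : 2*Real.pi*((j:ℝ)+1)/n - (2*(j:ℝ)+1)*Real.pi/n = Real.pi/n := by
    field_simp; ring
  rw [abs_le]
  constructor <;> linarith

lemma cell1_exists {n : ℕ} (hn : 0 < n) {x : ℝ} (hx0 : 0 ≤ x) (hx2 : x < 2*Real.pi) :
    ∃ j : ℕ, j < n ∧ 2*Real.pi*j/n ≤ x ∧ x < 2*Real.pi*(j+1)/n := by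
  have hn' : (0:ℝ) < n := by exact_mod_cast hn
  have h2pi : (0:ℝ) < 2*Real.pi := by positivity
  set t := x * n / (2*Real.pi) with ht
  have ht0 : 0 ≤ t := by positivity
  have hfl0 : 0 ≤ ⌊t⌋ := Int.floor_nonneg.2 ht0
  have hcast : ((⌊t⌋.toNat : ℕ) : ℝ) = ((⌊t⌋ : ℤ) : ℝ) := by
    exact_mod_cast congrArg (fun z : ℤ => (z : ℝ)) (Int.toNat_of_nonneg hfl0)
  have htn : t < n := by
    rw [ht, div_lt_iff₀ h2pi]
    nlinarith
  have hfln : ⌊t⌋ < (n:ℤ) := by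
    have := Int.floor_lt.2 (by exact_mod_cast htn : t < ((n:ℤ):ℝ))
    exact this
  refine ⟨⌊t⌋.toNat, by omega, ?_, ?_⟩
  · have h := Int.floor_le t
    rw [div_le_iff₀ hn']
    rw [ht, le_div_iff₀ h2pi] at h
    rw [hcast] at *
    nlinarith
  · have h := Int.lt_floor_add_one t
    rw [ht, div_lt_iff₀ h2pi] at h
    rw [hcast, lt_div_iff₀ hn']
    nlinarith

lemma cell1_unique {n j j' : ℕ} (hn : 0 < n) {x : ℝ}
    (h1 : 2*Real.pi*j/n ≤ x) (h2 : x < 2*Real.pi*(j+1)/n)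
    (h1' : 2*Real.pi*j'/n ≤ x) (h2' : x < 2*Real.pi*(j'+1)/n) : j = j' := by
  have hn' : (0:ℝ) < n := by exact_mod_cast hn
  have hpi := Real.pi_pos
  have k1 : (j:ℝ) < (j':ℝ) + 1 := by
    have h := lt_of_le_of_lt h1 h2'
    rw [div_lt_div_iff₀ hn' hn'] at h
    have h' := (mul_lt_mul_iff_left₀ hn').mp h
    exact (mul_lt_mul_iff_right₀ (by positivity : (0:ℝ) < 2*Real.pi)).mp h'
  have k2 : (j':ℝ) < (j:ℝ) + 1 := by
    have h := lt_of_le_of_lt h1' h2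
    rw [div_lt_div_iff₀ hn' hn'] at h
    have h' := (mul_lt_mul_iff_left₀ hn').mp h
    exact (mul_lt_mul_iff_right₀ (by positivity : (0:ℝ) < 2*Real.pi)).mp h'
  have : j < j' + 1 := by exact_mod_cast k1
  have : j' < j + 1 := by exact_mod_cast k2
  omega

lemma dZ_ctr {n j : ℕ} (hn : 0 < n) : Real.pi/n ≤ dZ ((2*(j:ℝ)+1)*Real.pi/n) := by
  have hn' : (0:ℝ) < n := by exact_mod_cast hn
  have hpi := Real.pi_pos
  set c : ℝ := (2*(j:ℝ)+1)*Real.pi/n with hc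
  set r : ℤ := round (c / (2*Real.pi)) with hr
  set m : ℤ := 2*(j:ℤ) + 1 - 2*r*n with hm
  have hme : c - 2*Real.pi*r = Real.pi * m / n := by
    rw [hc, hm]; push_cast; field_simp
  have hodd : Odd m := ⟨(j:ℤ) - r*n, by rw [hm]; ring⟩
  have hm0 : m ≠ 0 := by
    intro h0
    rw [h0] at hodd
    exact (Int.not_odd_iff_even.2 Even.zero) hodd
  have habs : (1:ℝ) ≤ |(m:ℝ)| := by
    have := Int.one_le_abs hm0
    calc (1:ℝ) = ((1:ℤ):ℝ) := by norm_num
      _ ≤ ((|m|:ℤ):ℝ) := by exact_mod_cast this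
      _ = |(m:ℝ)| := by push_cast; ring
  have : dZ c = |Real.pi * m / n| := by rw [dZ, ← hr, hme]
  rw [this, abs_div, abs_mul, abs_of_pos Real.pi_pos, abs_of_pos hn']
  rw [div_le_div_iff₀ hn' hn']
  nlinarith [mul_le_mul_of_nonneg_right (mul_le_mul_of_nonneg_left habs hpi.le) hn'.le]

noncomputable def Fstep (f : ℝ × ℝ → ℝ) (n : ℕ) (p : ℝ × ℝ) : ℝ :=
  ∑ j ∈ Finset.range n, ∑ k ∈ Finset.range n,
    (cellS n j k).indicator (fun _ => f (ctr n j k)) p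

lemma cellS_measurable (n j k : ℕ) : MeasurableSet (cellS n j k) :=
  measurableSet_Ico.prod measurableSet_Ico

lemma Fstep_measurable (f : ℝ × ℝ → ℝ) (n : ℕ) : Measurable (Fstep f n) := by
  apply Finset.measurable_sum
  intro j _
  apply Finset.measurable_sum
  intro k _
  exact measurable_const.indicator (cellS_measurable n j k)

lemma Fstep_eval {f : ℝ × ℝ → ℝ} {n j k : ℕ} (hj : j < n) (hk : k < n) {p : ℝ × ℝ}
    (hp : p ∈ cellS n j k) : Fstep f n p = f (ctr n j k) := by
  have hn : 0 < n := lt_of_le_of_lt (Nat.zero_le _) hj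
  obtain ⟨⟨ha, hb⟩, ⟨hc, hd⟩⟩ := hp
  rw [Fstep, Finset.sum_eq_single_of_mem j (Finset.mem_range.2 hj)]
  · rw [Finset.sum_eq_single_of_mem k (Finset.mem_range.2 hk)]
    · exact Set.indicator_of_mem (show p ∈ cellS n j k from ⟨⟨ha, hb⟩, ⟨hc, hd⟩⟩) _
    · intro k' _ hne
      refine Set.indicator_of_notMem (fun hp' => hne ?_) _
      exact cell1_unique hn hp'.2.1 hp'.2.2 hc hd
  · intro j' _ hne
    refine Finset.sum_eq_zero fun k' _ => ?_
    refine Set.indicator_of_notMem (fun hp' => hne ?_) _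
    exact cell1_unique hn hp'.1.1 hp'.1.2 ha hb

lemma cellS_subset {n j k : ℕ} (hj : j < n) (hk : k < n) :
    cellS n j k ⊆ Set.Icc (0:ℝ) (2*Real.pi) ×ˢ Set.Icc (0:ℝ) (2*Real.pi) := by
  have hn' : (0:ℝ) < n := by exact_mod_cast lt_of_le_of_lt (Nat.zero_le _) hj
  have hpi := Real.pi_pos
  rintro ⟨x, y⟩ ⟨⟨ha, hb⟩, ⟨hc, hd⟩⟩
  have bound : ∀ i : ℕ, i < n → ∀ z : ℝ, 2*Real.pi*i/n ≤ z → z < 2*Real.pi*(i+1)/n →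
      0 ≤ z ∧ z ≤ 2*Real.pi := by
    intro i hi z h1 h2
    constructor
    · have : (0:ℝ) ≤ 2*Real.pi*i/n := by positivity
      linarith
    · have hi' : (i:ℝ) + 1 ≤ n := by exact_mod_cast hi
      have : 2*Real.pi*((i:ℝ)+1)/n ≤ 2*Real.pi := by
        rw [div_le_iff₀ hn']
        nlinarith
      linarith
  exact ⟨bound j hj x ha hb, bound k hk y hc hd⟩

lemma cellS_volume {n j k : ℕ} (hn : 0 < n) :
    volume (cellS n j k) = ENNReal.ofReal (2*Real.pi/n) * ENNReal.ofReal (2*Real.pi/n) := by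
  have hn' : (0:ℝ) < n := by exact_mod_cast hn
  have e : ∀ i : ℕ, 2*Real.pi*((i:ℝ)+1)/n - 2*Real.pi*i/n = 2*Real.pi/n := by
    intro i; field_simp; ring
  rw [cellS, Measure.volume_eq_prod, Measure.prod_prod, Real.volume_Ico, Real.volume_Ico,
    e j, e k]

lemma Fstep_integral (f : ℝ × ℝ → ℝ) (n : ℕ) :
    ∫ p in Set.Icc (0:ℝ) (2*Real.pi) ×ˢ Set.Icc (0:ℝ) (2*Real.pi), Fstep f n p
      = ∑ j ∈ Finset.range n, ∑ k ∈ Finset.range n, (2*Real.pi/n)^2 * f (ctr n j k) := by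
  set SQ := Set.Icc (0:ℝ) (2*Real.pi) ×ˢ Set.Icc (0:ℝ) (2*Real.pi) with hSQ
  have hvol : volume SQ < ⊤ := (isCompact_Icc.prod isCompact_Icc).measure_lt_top
  have hint : ∀ j k : ℕ, IntegrableOn
      ((cellS n j k).indicator (fun _ => f (ctr n j k))) SQ volume := by
    intro j k
    exact (integrableOn_const hvol.ne).indicator (cellS_measurable n j k)
  rw [show (fun p => Fstep f n p) = Fstep f n from rfl]
  unfold Fstep
  rw [integral_finset_sum _ (fun j _ => integrable_finset_sum _ (fun k _ => hint j k))]
  refine Finset.sum_congr rfl fun j hj => ?_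
  rw [integral_finset_sum _ (fun k _ => hint j k)]
  refine Finset.sum_congr rfl fun k hk => ?_
  rw [setIntegral_indicator (cellS_measurable n j k)]
  rw [Set.inter_eq_self_of_subset_right (cellS_subset (Finset.mem_range.1 hj) (Finset.mem_range.1 hk))]
  rw [setIntegral_const, measureReal_def, cellS_volume (lt_of_le_of_lt (Nat.zero_le _) (Finset.mem_range.1 hj))]
  rw [ENNReal.toReal_mul, ENNReal.toReal_ofReal (by positivity)]
  rw [smul_eq_mul]
  ring

lemma dZ_measurable : Measurable dZ := by
  have h1 : Measurable fun x : ℝ => round (x / (2*Real.pi)) := by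
    have : (fun x : ℝ => round (x / (2*Real.pi))) = fun x => ⌊x / (2*Real.pi) + 1/2⌋ := by
      funext x; rw [round_eq]
    rw [this]
    exact ((measurable_id.div_const _).add_const _).floor
  have h2 : Measurable fun x : ℝ => ((round (x / (2*Real.pi)) : ℤ) : ℝ) :=
    measurable_from_top.comp h1
  exact (measurable_id.sub (h2.const_mul _)).abs

lemma wfun_measurable : Measurable wfun :=
  dZ_measurable.pow measurable_const

lemma wfun_nonneg (x : ℝ) : 0 ≤ wfun x := Real.rpow_nonneg (dZ_nonneg x) _

lemma wfun_integrableOn : IntegrableOn wfun (Set.Icc (0:ℝ) (2*Real.pi)) volume := by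
  have hpi := Real.pi_pos
  have h02 : (0:ℝ) ≤ 2*Real.pi := by positivity
  set φ : ℝ → ℝ := fun x => x ^ (-(4⁻¹):ℝ) + (2*Real.pi - x) ^ (-(4⁻¹):ℝ) with hφ
  have i1 : IntervalIntegrable (fun x : ℝ => x ^ (-(4⁻¹):ℝ)) volume 0 (2*Real.pi) :=
    intervalIntegral.intervalIntegrable_rpow' (by norm_num)
  have i2 : IntervalIntegrable (fun x : ℝ => (2*Real.pi - x) ^ (-(4⁻¹):ℝ)) volume 0 (2*Real.pi) := by
    have := (intervalIntegral.intervalIntegrable_rpow' (r := -(4⁻¹))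
      (a := 0) (b := 2*Real.pi) (by norm_num)).comp_sub_left (2*Real.pi)
    simpa using this.symm
  have iφ : IntegrableOn φ (Set.Icc (0:ℝ) (2*Real.pi)) volume := by
    rw [← intervalIntegrable_iff_integrableOn_Icc_of_le h02]
    exact i1.add i2
  refine Integrable.mono' iφ wfun_measurable.aestronglyMeasurable ?_
  rw [ae_restrict_iff' measurableSet_Icc]
  refine Filter.Eventually.of_forall fun x hx => ?_
  obtain ⟨hx0, hx2⟩ := hx
  have hr : round (x / (2*Real.pi)) = 0 ∨ round (x / (2*Real.pi)) = 1 := by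
    have habs := abs_sub_round (x / (2*Real.pi))
    have ht0 : 0 ≤ x / (2*Real.pi) := by positivity
    have ht1 : x / (2*Real.pi) ≤ 1 := by
      rw [div_le_one (by positivity)]; linarith
    rw [abs_le] at habs
    have l1 : (-1:ℝ) < (round (x / (2*Real.pi)) : ℝ) := by linarith
    have l2 : ((round (x / (2*Real.pi)) : ℤ) : ℝ) < 2 := by linarith
    have l1' : (-1:ℤ) < round (x / (2*Real.pi)) := by exact_mod_cast l1
    have l2' : round (x / (2*Real.pi)) < 2 := by exact_mod_cast l2
    omega
  have key : dZ x = x ∨ dZ x = 2*Real.pi - x := by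
    rcases hr with h | h
    · left; rw [dZ, h]; push_cast; rw [mul_zero, sub_zero, abs_of_nonneg hx0]
    · right; rw [dZ, h]; push_cast; rw [mul_one, abs_of_nonpos (by linarith)]; ring
  have hn1 : (0:ℝ) ≤ x ^ (-(4⁻¹):ℝ) := Real.rpow_nonneg hx0 _
  have hn2 : (0:ℝ) ≤ (2*Real.pi - x) ^ (-(4⁻¹):ℝ) := Real.rpow_nonneg (by linarith) _
  rw [Real.norm_eq_abs, abs_of_nonneg (wfun_nonneg x)]
  rcases key with h | h
  · calc wfun x = x ^ (-(4⁻¹):ℝ) := by rw [wfun, h]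
      _ ≤ φ x := by rw [hφ]; simp only []; linarith
  · calc wfun x = (2*Real.pi - x) ^ (-(4⁻¹):ℝ) := by rw [wfun, h]
      _ ≤ φ x := by rw [hφ]; simp only []; linarith

lemma badSet_null : volume {p : ℝ × ℝ | dZ p.1 = 0 ∨ dZ p.2 = 0} = 0 := by
  have line1 : ∀ a : ℝ, volume ({a} ×ˢ (Set.univ : Set ℝ)) = 0 := by
    intro a
    rw [Measure.volume_eq_prod, Measure.prod_prod, Real.volume_singleton, zero_mul]
  have line2 : ∀ a : ℝ, volume ((Set.univ : Set ℝ) ×ˢ ({a} : Set ℝ)) = 0 := by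
    intro a
    rw [Measure.volume_eq_prod, Measure.prod_prod, Real.volume_singleton, mul_zero]
  have h1 : volume {p : ℝ × ℝ | dZ p.1 = 0} = 0 := by
    refine measure_mono_null (fun p hp => ?_) (measure_iUnion_null (fun m : ℤ => line1 (2*Real.pi*m)))
    rcases (dZ_eq_zero_iff p.1).1 hp with ⟨m, hm⟩
    exact Set.mem_iUnion.2 ⟨m, ⟨hm, trivial⟩⟩
  have h2 : volume {p : ℝ × ℝ | dZ p.2 = 0} = 0 := by
    refine measure_mono_null (fun p hp => ?_) (measure_iUnion_null (fun m : ℤ => line2 (2*Real.pi*m)))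
    rcases (dZ_eq_zero_iff p.2).1 hp with ⟨m, hm⟩
    exact Set.mem_iUnion.2 ⟨m, ⟨trivial, hm⟩⟩
  have : {p : ℝ × ℝ | dZ p.1 = 0 ∨ dZ p.2 = 0}
      ⊆ {p : ℝ × ℝ | dZ p.1 = 0} ∪ {p : ℝ × ℝ | dZ p.2 = 0} := fun p hp => hp
  exact measure_mono_null this (measure_union_null h1 h2)

lemma not_in_lattice {p : ℝ × ℝ} (h1 : dZ p.1 ≠ 0) : p ∉ twoPiLattice := by
  rintro ⟨m, n, rfl⟩
  exact h1 ((dZ_eq_zero_iff _).2 ⟨m, rfl⟩)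

lemma one_add_abs_log_le {p : ℝ × ℝ}
    (hp : p ∈ Set.Icc (0:ℝ) (2*Real.pi) ×ˢ Set.Icc (0:ℝ) (2*Real.pi))
    (h1 : dZ p.1 ≠ 0) (h2 : dZ p.2 ≠ 0) :
    1 + |Real.log (distTwoPiLattice p)| ≤ 9 + 4 * (wfun p.1 * wfun p.2) := by
  have h1' : 0 < dZ p.1 := lt_of_le_of_ne (dZ_nonneg _) (Ne.symm h1)
  have h2' : 0 < dZ p.2 := lt_of_le_of_ne (dZ_nonneg _) (Ne.symm h2)
  have hD0 : 0 < distTwoPiLattice p := lt_of_lt_of_le h1' (dZ_le_distL_fst p)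
  have hD9 : distTwoPiLattice p ≤ 9 := distL_le_nine hp
  have hlog := abs_log_le hD0 hD9
  have hw := distL_rpow_le p h1' h2'
  have hwn : 0 ≤ wfun p.1 * wfun p.2 := mul_nonneg (wfun_nonneg _) (wfun_nonneg _)
  have hr : 0 ≤ (distTwoPiLattice p) ^ (-(2⁻¹):ℝ) := Real.rpow_nonneg hD0.le _
  linarith

lemma abs_f_le_G {f : ℝ × ℝ → ℝ} {C : ℝ}
    (hbound : ∀ p : ℝ × ℝ, p ∉ twoPiLattice →
      |f p| ≤ C * (1 + |Real.log (distTwoPiLattice p)|))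
    {p : ℝ × ℝ} (hp : p ∈ Set.Icc (0:ℝ) (2*Real.pi) ×ˢ Set.Icc (0:ℝ) (2*Real.pi))
    (h1 : dZ p.1 ≠ 0) (h2 : dZ p.2 ≠ 0) :
    |f p| ≤ |C| * (9 + 4 * (wfun p.1 * wfun p.2)) := by
  have hnl := not_in_lattice h1
  have hb := hbound p hnl
  have hD0 : 0 < distTwoPiLattice p :=
    lt_of_lt_of_le (lt_of_le_of_ne (dZ_nonneg _) (Ne.symm h1)) (dZ_le_distL_fst p)
  have hpos : 0 ≤ 1 + |Real.log (distTwoPiLattice p)| := by positivity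
  have hCa : C * (1 + |Real.log (distTwoPiLattice p)|)
      ≤ |C| * (1 + |Real.log (distTwoPiLattice p)|) :=
    mul_le_mul_of_nonneg_right (le_abs_self C) hpos
  have hkey := one_add_abs_log_le hp h1 h2
  calc |f p| ≤ |C| * (1 + |Real.log (distTwoPiLattice p)|) := le_trans hb hCa
    _ ≤ |C| * (9 + 4 * (wfun p.1 * wfun p.2)) :=
      mul_le_mul_of_nonneg_left hkey (abs_nonneg C)

lemma mem_cell_of_mem_sq {n : ℕ} (hn : 0 < n) {p : ℝ × ℝ}
    (hp : p ∈ Set.Icc (0:ℝ) (2*Real.pi) ×ˢ Set.Icc (0:ℝ) (2*Real.pi))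
    (h1 : dZ p.1 ≠ 0) (h2 : dZ p.2 ≠ 0) :
    ∃ j k : ℕ, j < n ∧ k < n ∧ p ∈ cellS n j k := by
  obtain ⟨⟨ha, hb⟩, ⟨hc, hd⟩⟩ := hp
  have hb' : p.1 < 2*Real.pi := by
    rcases lt_or_eq_of_le hb with h | h
    · exact h
    · exact absurd ((dZ_eq_zero_iff p.1).2 ⟨1, by rw [h]; push_cast; ring⟩) h1
  have hd' : p.2 < 2*Real.pi := by
    rcases lt_or_eq_of_le hd with h | h
    · exact h
    · exact absurd ((dZ_eq_zero_iff p.2).2 ⟨1, by rw [h]; push_cast; ring⟩) h2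
  obtain ⟨j, hj, hj1, hj2⟩ := cell1_exists hn ha hb'
  obtain ⟨k, hk, hk1, hk2⟩ := cell1_exists hn hc hd'
  exact ⟨j, k, hj, hk, ⟨⟨hj1, hj2⟩, ⟨hk1, hk2⟩⟩⟩

lemma ctr_mem_cell {n j k : ℕ} (hj : j < n) (hk : k < n) : ctr n j k ∈ cellS n j k := by
  have hn' : (0:ℝ) < n := by exact_mod_cast lt_of_le_of_lt (Nat.zero_le _) hj
  have hpi := Real.pi_pos
  have aux : ∀ i : ℕ, 2*Real.pi*(i:ℝ)/n ≤ (2*(i:ℝ)+1)*Real.pi/n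
      ∧ (2*(i:ℝ)+1)*Real.pi/n < 2*Real.pi*((i:ℝ)+1)/n := by
    intro i
    constructor
    · rw [div_le_div_iff₀ hn' hn']; nlinarith
    · rw [div_lt_div_iff₀ hn' hn']; nlinarith
  exact ⟨⟨(aux j).1, (aux j).2⟩, ⟨(aux k).1, (aux k).2⟩⟩

lemma dist_ctr_le {n j k : ℕ} (hn : 0 < n) {p : ℝ × ℝ} (hp : p ∈ cellS n j k) :
    ‖toC p - toC (ctr n j k)‖ ≤ 2*Real.pi/n := by
  have hn' : (0:ℝ) < n := by exact_mod_cast hn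
  have hpi := Real.pi_pos
  obtain ⟨⟨ha, hb⟩, ⟨hc, hd⟩⟩ := hp
  have e1 : |p.1 - (2*(j:ℝ)+1)*Real.pi/n| ≤ Real.pi/n := cell1_abs hn ha hb
  have e2 : |p.2 - (2*(k:ℝ)+1)*Real.pi/n| ≤ Real.pi/n := cell1_abs hn hc hd
  have hsub : toC p - toC (ctr n j k)
      = (⟨p.1 - (2*(j:ℝ)+1)*Real.pi/n, p.2 - (2*(k:ℝ)+1)*Real.pi/n⟩ : ℂ) := by
    rw [Complex.ext_iff]
    constructor <;> simp [toC, ctr]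
  rw [hsub, ← sqrt_sq_add_sq]
  have hb1 : (p.1 - (2*(j:ℝ)+1)*Real.pi/n)^2 ≤ (Real.pi/n)^2 := by
    rw [← sq_abs]; exact pow_le_pow_left₀ (abs_nonneg _) e1 2
  have hb2 : (p.2 - (2*(k:ℝ)+1)*Real.pi/n)^2 ≤ (Real.pi/n)^2 := by
    rw [← sq_abs]; exact pow_le_pow_left₀ (abs_nonneg _) e2 2
  calc Real.sqrt ((p.1 - (2*(j:ℝ)+1)*Real.pi/n)^2 + (p.2 - (2*(k:ℝ)+1)*Real.pi/n)^2)
      ≤ Real.sqrt ((2*Real.pi/n)^2) := by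
        refine Real.sqrt_le_sqrt ?_
        have hexp : (2*Real.pi/(n:ℝ))^2 = 4*(Real.pi/(n:ℝ))^2 := by ring
        have hsq : (0:ℝ) ≤ (Real.pi/(n:ℝ))^2 := sq_nonneg _
        linarith
    _ = 2*Real.pi/n := Real.sqrt_sq (by positivity)

lemma abs_Fstep_le_G {f : ℝ × ℝ → ℝ} {C : ℝ}
    (hbound : ∀ p : ℝ × ℝ, p ∉ twoPiLattice →
      |f p| ≤ C * (1 + |Real.log (distTwoPiLattice p)|))
    (n : ℕ) {p : ℝ × ℝ}
    (hp : p ∈ Set.Icc (0:ℝ) (2*Real.pi) ×ˢ Set.Icc (0:ℝ) (2*Real.pi))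
    (h1 : dZ p.1 ≠ 0) (h2 : dZ p.2 ≠ 0) :
    |Fstep f n p| ≤ |C| * (9 + 4 * (wfun p.1 * wfun p.2)) := by
  have hwn : 0 ≤ wfun p.1 * wfun p.2 := mul_nonneg (wfun_nonneg _) (wfun_nonneg _)
  rcases Nat.eq_zero_or_pos n with rfl | hn
  · simp only [Fstep, Finset.range_zero, Finset.sum_empty, abs_zero]
    positivity
  have hn' : (0:ℝ) < n := by exact_mod_cast hn
  have hpi := Real.pi_pos
  obtain ⟨j, k, hj, hk, hcell⟩ := mem_cell_of_mem_sq hn hp h1 h2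
  rw [Fstep_eval hj hk hcell]
  set c := ctr n j k with hcdef
  -- basic facts about c
  have hdZc : Real.pi/n ≤ dZ c.1 := dZ_ctr hn
  have hDc0 : 0 < distTwoPiLattice c :=
    lt_of_lt_of_le (by positivity) (le_trans hdZc (dZ_le_distL_fst c))
  have hcnl : c ∉ twoPiLattice := by
    intro hcl
    rcases hcl with ⟨m, m', hm⟩
    have : dZ c.1 = 0 := (dZ_eq_zero_iff _).2 ⟨m, by rw [hm]⟩
    have : (0:ℝ) < Real.pi/n := by positivity
    linarith [hdZc]
  have hcsq : c ∈ Set.Icc (0:ℝ) (2*Real.pi) ×ˢ Set.Icc (0:ℝ) (2*Real.pi) :=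
    cellS_subset hj hk (ctr_mem_cell hj hk)
  have hDc9 : distTwoPiLattice c ≤ 9 := distL_le_nine hcsq
  have hb := hbound c hcnl
  have hCa : C * (1 + |Real.log (distTwoPiLattice c)|)
      ≤ |C| * (1 + |Real.log (distTwoPiLattice c)|) :=
    mul_le_mul_of_nonneg_right (le_abs_self C) (by positivity)
  have hfc : |f c| ≤ |C| * (1 + |Real.log (distTwoPiLattice c)|) := le_trans hb hCa
  rcases le_or_gt 1 (distTwoPiLattice c) with hca | hca
  · -- large distance: log bounded by 8
    have hl : |Real.log (distTwoPiLattice c)| ≤ 8 := by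
      rw [abs_of_nonneg (Real.log_nonneg hca)]
      have := Real.log_le_sub_one_of_pos hDc0
      linarith
    have : |f c| ≤ |C| * 9 :=
      le_trans hfc (mul_le_mul_of_nonneg_left (by linarith) (abs_nonneg C))
    nlinarith [abs_nonneg C]
  · -- small distance: compare with distance of p
    have h1p : 0 < dZ p.1 := lt_of_le_of_ne (dZ_nonneg _) (Ne.symm h1)
    have h2p : 0 < dZ p.2 := lt_of_le_of_ne (dZ_nonneg _) (Ne.symm h2)
    have hDp0 : 0 < distTwoPiLattice p := lt_of_lt_of_le h1p (dZ_le_distL_fst p)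
    have htri := distL_triangle p c
    have hdist := dist_ctr_le hn hcell
    have h2pn : 2*Real.pi/n ≤ 2 * distTwoPiLattice c := by
      have := le_trans hdZc (dZ_le_distL_fst c)
      calc 2*Real.pi/n = 2 * (Real.pi/n) := by ring
        _ ≤ 2 * distTwoPiLattice c := by linarith
    have hDp3 : distTwoPiLattice p ≤ 3 * distTwoPiLattice c := by linarith
    have hquart : distTwoPiLattice p / 4 ≤ distTwoPiLattice c := by linarith
    have hmono : (distTwoPiLattice c) ^ (-(2⁻¹):ℝ)
        ≤ (distTwoPiLattice p / 4) ^ (-(2⁻¹):ℝ) :=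
      Real.rpow_le_rpow_of_nonpos (by positivity) hquart (by norm_num)
    have hfour : ((4:ℝ)) ^ (-(2⁻¹):ℝ) = 2⁻¹ := by
      rw [Real.rpow_neg (by norm_num)]
      congr 1
      rw [show (4:ℝ) = 2^(2:ℕ) by norm_num, ← Real.rpow_natCast (2:ℝ) 2,
        ← Real.rpow_mul (by norm_num)]
      norm_num
    have hdiv : (distTwoPiLattice p / 4) ^ (-(2⁻¹):ℝ)
        = 2 * (distTwoPiLattice p) ^ (-(2⁻¹):ℝ) := by
      rw [Real.div_rpow hDp0.le (by norm_num), hfour]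
      ring
    have hrple := distL_rpow_le p h1p h2p
    have hlog : |Real.log (distTwoPiLattice c)| ≤ 4 * (wfun p.1 * wfun p.2) := by
      rw [abs_of_nonpos (Real.log_nonpos hDc0.le hca.le)]
      have hneg := neg_log_le hDc0
      have : (distTwoPiLattice c) ^ (-(2⁻¹):ℝ) ≤ 2 * (wfun p.1 * wfun p.2) := by
        rw [hdiv] at hmono
        linarith
      linarith
    calc |f c| ≤ |C| * (1 + 4 * (wfun p.1 * wfun p.2)) :=
        le_trans hfc (mul_le_mul_of_nonneg_left (by linarith) (abs_nonneg C))
      _ ≤ |C| * (9 + 4 * (wfun p.1 * wfun p.2)) :=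
        mul_le_mul_of_nonneg_left (by linarith) (abs_nonneg C)

lemma tendsto_Fstep {f : ℝ × ℝ → ℝ}
    (hcont : ∀ p : ℝ × ℝ, p ∉ twoPiLattice → ContinuousAt f p)
    {p : ℝ × ℝ} (hp : p ∈ Set.Icc (0:ℝ) (2*Real.pi) ×ˢ Set.Icc (0:ℝ) (2*Real.pi))
    (h1 : dZ p.1 ≠ 0) (h2 : dZ p.2 ≠ 0) :
    Filter.Tendsto (fun n => Fstep f n p) Filter.atTop (nhds (f p)) := by
  have key : ∀ n : ℕ, 0 < n → ∃ c : ℝ × ℝ, Fstep f n p = f c ∧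
      |c.1 - p.1| ≤ Real.pi/n ∧ |c.2 - p.2| ≤ Real.pi/n := by
    intro n hn
    obtain ⟨j, k, hj, hk, hcell⟩ := mem_cell_of_mem_sq hn hp h1 h2
    obtain ⟨⟨ha, hb⟩, ⟨hc, hd⟩⟩ := hcell
    refine ⟨ctr n j k, Fstep_eval hj hk ⟨⟨ha, hb⟩, ⟨hc, hd⟩⟩, ?_, ?_⟩
    · rw [show (ctr n j k).1 - p.1 = -(p.1 - (2*(j:ℝ)+1)*Real.pi/n) by rw [ctr]; ring,
        abs_neg]
      exact cell1_abs hn ha hb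
    · rw [show (ctr n j k).2 - p.2 = -(p.2 - (2*(k:ℝ)+1)*Real.pi/n) by rw [ctr]; ring,
        abs_neg]
      exact cell1_abs hn hc hd
  set c : ℕ → ℝ × ℝ := fun n => if h : 0 < n then (key n h).choose else p with hcdef
  have hceq : ∀ n : ℕ, 0 < n → Fstep f n p = f (c n) := by
    intro n hn
    rw [hcdef]; simp only [dif_pos hn]
    exact (key n hn).choose_spec.1
  have hc1 : ∀ n : ℕ, 0 < n → dist (c n).1 p.1 ≤ Real.pi/n := by
    intro n hn
    rw [hcdef]; simp only [dif_pos hn, Real.dist_eq]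
    exact (key n hn).choose_spec.2.1
  have hc2 : ∀ n : ℕ, 0 < n → dist (c n).2 p.2 ≤ Real.pi/n := by
    intro n hn
    rw [hcdef]; simp only [dif_pos hn, Real.dist_eq]
    exact (key n hn).choose_spec.2.2
  have htc : Filter.Tendsto c Filter.atTop (nhds p) := by
    have haux : ∀ (g : ℕ → ℝ) (x : ℝ), (∀ n : ℕ, 0 < n → dist (g n) x ≤ Real.pi/n) →
        Filter.Tendsto g Filter.atTop (nhds x) := by
      intro g x hg
      rw [tendsto_iff_dist_tendsto_zero]
      refine squeeze_zero' (Filter.Eventually.of_forall fun n => dist_nonneg) ?_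
        (tendsto_const_div_atTop_nhds_zero_nat Real.pi)
      filter_upwards [Filter.eventually_gt_atTop 0] with n hn
      exact hg n hn
    have t1 := haux (fun n => (c n).1) p.1 hc1
    have t2 := haux (fun n => (c n).2) p.2 hc2
    have := t1.prodMk_nhds t2
    simpa using this
  have hnl : p ∉ twoPiLattice := not_in_lattice h1
  have hmain : Filter.Tendsto (fun n => f (c n)) Filter.atTop (nhds (f p)) :=
    (hcont p hnl).tendsto.comp htc
  refine hmain.congr' ?_
  filter_upwards [Filter.eventually_gt_atTop 0] with n hn
  exact (hceq n hn).symm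

/-- A doubly `2π`-periodic function which is continuous away from `2πℤ²` and
has at most a logarithmic singularity there is integrable on `[0,2π]²`, and its
Riemann sums over the grid `((2j+1)π/n, (2k+1)π/n)` (i.e. over pairs of `n`-th
roots of `-1`) converge to `1/(4π²)` times its integral over `[0,2π]²`. -/
theorem riemann_sum_roots_of_neg_one_converges (f : ℝ × ℝ → ℝ)
    (hper1 : ∀ θ η : ℝ, f (θ + 2 * Real.pi, η) = f (θ, η))
    (hper2 : ∀ θ η : ℝ, f (θ, η + 2 * Real.pi) = f (θ, η))
    (hcont : ∀ p : ℝ × ℝ, p ∉ twoPiLattice → ContinuousAt f p)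
    (C : ℝ)
    (hbound : ∀ p : ℝ × ℝ, p ∉ twoPiLattice →
      |f p| ≤ C * (1 + |Real.log (distTwoPiLattice p)|)) :
    IntegrableOn f (Set.Icc (0 : ℝ) (2 * Real.pi) ×ˢ Set.Icc (0 : ℝ) (2 * Real.pi)) ∧
    Filter.Tendsto
      (fun n : ℕ => (1 / (n : ℝ) ^ 2) *
        ∑ j ∈ Finset.range n, ∑ k ∈ Finset.range n,
          f ((2 * (j : ℝ) + 1) * Real.pi / n, (2 * (k : ℝ) + 1) * Real.pi / n))
      Filter.atTop
      (nhds ((1 / (4 * Real.pi ^ 2)) *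
        ∫ p in Set.Icc (0 : ℝ) (2 * Real.pi) ×ˢ Set.Icc (0 : ℝ) (2 * Real.pi), f p)) := by
  set SQ := Set.Icc (0:ℝ) (2*Real.pi) ×ˢ Set.Icc (0:ℝ) (2*Real.pi) with hSQ
  have hSQm : MeasurableSet SQ := measurableSet_Icc.prod measurableSet_Icc
  have hvol : volume SQ < ⊤ := (isCompact_Icc.prod isCompact_Icc).measure_lt_top
  set G : ℝ × ℝ → ℝ := fun p => |C| * (9 + 4 * (wfun p.1 * wfun p.2)) with hG
  have hw2 : Integrable (fun p : ℝ × ℝ => wfun p.1 * wfun p.2) (volume.restrict SQ) := by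
    rw [hSQ, Measure.volume_eq_prod ℝ ℝ, ← Measure.prod_restrict]
    exact Integrable.mul_prod wfun_integrableOn wfun_integrableOn
  have hGint : Integrable G (volume.restrict SQ) := by
    have hconst : Integrable (fun _ : ℝ × ℝ => |C| * 9) (volume.restrict SQ) :=
      integrableOn_const hvol.ne
    have hGeq : G = fun p => |C| * 9 + (|C| * 4) * (wfun p.1 * wfun p.2) :=
      funext fun p => by rw [hG]; ring
    rw [hGeq]
    exact hconst.add (hw2.const_mul _)
  have haeB : ∀ᵐ q : ℝ × ℝ ∂volume, ¬(dZ q.1 = 0 ∨ dZ q.2 = 0) :=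
    measure_eq_zero_iff_ae_notMem.1 badSet_null
  have hlatc : twoPiLattice.Countable := by
    have : twoPiLattice
        = Set.range (fun q : ℤ × ℤ => ((2*Real.pi*q.1 : ℝ), (2*Real.pi*q.2 : ℝ))) := by
      ext p
      constructor
      · rintro ⟨m, m', hm⟩; exact ⟨(m, m'), hm.symm⟩
      · rintro ⟨⟨m, m'⟩, hm⟩; exact ⟨m, m', hm.symm⟩
    rw [this]
    exact Set.countable_range _
  have hlatnull : volume twoPiLattice = 0 := hlatc.measure_zero _
  have hlatm : MeasurableSet twoPiLattice := hlatc.measurableSet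
  have hfm : AEStronglyMeasurable f (volume.restrict SQ) := by
    have hcO : ContinuousOn f (SQ \ twoPiLattice) := fun x hx =>
      (hcont x hx.2).continuousWithinAt
    have h1 : AEStronglyMeasurable f (volume.restrict (SQ \ twoPiLattice)) :=
      hcO.aestronglyMeasurable (hSQm.diff hlatm)
    have heq : (SQ \ twoPiLattice : Set (ℝ × ℝ)) =ᵐ[volume] SQ :=
      diff_ae_eq_self.2 (measure_mono_null (Set.inter_subset_right : SQ ∩ twoPiLattice ⊆ twoPiLattice) hlatnull)
    rwa [Measure.restrict_congr_set heq] at h1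
  have hfb : ∀ᵐ q ∂(volume.restrict SQ), ‖f q‖ ≤ G q := by
    rw [ae_restrict_iff' hSQm]
    filter_upwards [haeB] with q hq hqSQ
    push_neg at hq
    rw [Real.norm_eq_abs, hG]
    exact abs_f_le_G hbound hqSQ hq.1 hq.2
  have hfint : IntegrableOn f SQ volume := Integrable.mono' hGint hfm hfb
  refine ⟨hfint, ?_⟩
  have hFb : ∀ n : ℕ, ∀ᵐ q ∂(volume.restrict SQ), ‖Fstep f n q‖ ≤ G q := by
    intro n
    rw [ae_restrict_iff' hSQm]
    filter_upwards [haeB] with q hq hqSQ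
    push_neg at hq
    rw [Real.norm_eq_abs, hG]
    exact abs_Fstep_le_G hbound n hqSQ hq.1 hq.2
  have hFlim : ∀ᵐ q ∂(volume.restrict SQ),
      Filter.Tendsto (fun n => Fstep f n q) Filter.atTop (nhds (f q)) := by
    rw [ae_restrict_iff' hSQm]
    filter_upwards [haeB] with q hq hqSQ
    push_neg at hq
    exact tendsto_Fstep hcont hqSQ hq.1 hq.2
  have hDCT := MeasureTheory.tendsto_integral_of_dominated_convergence G
    (fun n => (Fstep_measurable f n).aestronglyMeasurable) hGint hFb hFlim
  have hT := hDCT.const_mul (1 / (4 * Real.pi ^ 2))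
  refine Filter.Tendsto.congr ?_ hT
  intro n
  have hFi : (∫ q, Fstep f n q ∂(volume.restrict SQ))
      = ∑ j ∈ Finset.range n, ∑ k ∈ Finset.range n, (2*Real.pi/n)^2 * f (ctr n j k) := by
    rw [hSQ]
    exact Fstep_integral f n
  rw [hFi]
  have harith : (1 / (4*Real.pi^2)) * (2*Real.pi/(n:ℝ))^2 = 1/(n:ℝ)^2 := by
    rcases eq_or_ne ((n:ℝ)) 0 with h | h
    · rw [h]; norm_num
    · have hpi := Real.pi_ne_zero
      field_simp
      ring
  have hterm : ∀ x : ℝ, (1 / (4*Real.pi^2)) * ((2*Real.pi/(n:ℝ))^2 * x) = (1/(n:ℝ)^2) * x :=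
    fun x => by rw [← mul_assoc, harith]
  rw [Finset.mul_sum, Finset.mul_sum]
  refine Finset.sum_congr rfl fun j _ => ?_
  rw [Finset.mul_sum, Finset.mul_sum]
  refine Finset.sum_congr rfl fun k _ => ?_
  exact hterm _
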